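/- Let μ be a probability measure on ℝ and let G_μ(z) = ∫ 1/(z−x) dμ(x) be its Cauchy transform on the upper half-plane H. Then for every z ∈ H, Im(1/G_μ(z)) ≥ Im z, with equality for some z ∈ H if and only if μ is a Dirac measure δ_a for some a ∈ ℝ. -/

import Mathlib

open MeasureTheory Complex

/-- The Cauchy transform `G_μ(z) = ∫ 1/(z − x) dμ(x)` of a measure on `ℝ`. -/
noncomputable def cauchyTransform (μ : Measure ℝ) (z : ℂ) : ℂ :=
  ∫ x, (z - (x : ℂ))⁻¹ ∂μ

section aux

variable {z : ℂ}

lemma ct_sub_ne (hz : 0 < z.im) (x : ℝ) : z - (x : ℂ) ≠ 0 := by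
  intro h
  have h2 : (z - (x : ℂ)).im = 0 := by rw [h]; simp
  rw [Complex.sub_im, Complex.ofReal_im] at h2
  linarith

lemma ct_im_le (hz : 0 < z.im) (x : ℝ) : z.im ≤ ‖z - (x : ℂ)‖ := by
  have h1 : z.im = (z - (x : ℂ)).im := by simp
  calc z.im = (z - (x : ℂ)).im := h1
    _ ≤ |(z - (x : ℂ)).im| := le_abs_self _
    _ ≤ ‖z - (x : ℂ)‖ := Complex.abs_im_le_norm _

lemma ct_cont (hz : 0 < z.im) : Continuous fun x : ℝ => (z - (x : ℂ))⁻¹ := by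
  exact (continuous_const.sub Complex.continuous_ofReal).inv₀ (ct_sub_ne hz)

lemma ct_integrable (μ : Measure ℝ) [IsProbabilityMeasure μ] (hz : 0 < z.im) :
    Integrable (fun x : ℝ => (z - (x : ℂ))⁻¹) μ := by
  refine (integrable_const (z.im)⁻¹).mono' (ct_cont hz).aestronglyMeasurable ?_
  filter_upwards with x
  rw [norm_inv]
  exact inv_anti₀ hz (ct_im_le hz x)

lemma ct_integrable_sq (μ : Measure ℝ) [IsProbabilityMeasure μ] (hz : 0 < z.im) :
    Integrable (fun x : ℝ => Complex.normSq ((z - (x : ℂ))⁻¹)) μ := by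
  refine (integrable_const ((z.im) ^ 2)⁻¹).mono'
    (Complex.continuous_normSq.comp (ct_cont hz)).aestronglyMeasurable ?_
  filter_upwards with x
  rw [Real.norm_eq_abs, _root_.abs_of_nonneg (Complex.normSq_nonneg _)]
  rw [map_inv₀, ← Complex.sq_norm]
  have h1 : z.im ^ 2 ≤ ‖z - (x : ℂ)‖ ^ 2 :=
    pow_le_pow_left₀ hz.le (ct_im_le hz x) 2
  exact inv_anti₀ (by positivity) h1

/-- The key quantitative lemma: the inequality, plus extraction of a Dirac measure
from equality. -/
lemma ct_key (μ : Measure ℝ) [IsProbabilityMeasure μ] (hz : 0 < z.im) :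
    z.im ≤ (1 / cauchyTransform μ z).im ∧
      ((1 / cauchyTransform μ z).im = z.im → ∃ a : ℝ, μ = Measure.dirac a) := by
  set f : ℝ → ℂ := fun x => (z - (x : ℂ))⁻¹ with hf
  set G : ℂ := cauchyTransform μ z with hG
  set I : ℝ := ∫ x, Complex.normSq (f x) ∂μ with hI
  have hInt : Integrable f μ := ct_integrable μ hz
  have hIntSq : Integrable (fun x => Complex.normSq (f x)) μ := ct_integrable_sq μ hz
  -- the imaginary part of G
  have him : ∀ x : ℝ, (f x).im = -(z.im * Complex.normSq (f x)) := by
    intro x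
    rw [hf]
    simp only []
    rw [Complex.inv_im, map_inv₀, Complex.sub_im, Complex.ofReal_im, sub_zero]
    have h0 : Complex.normSq (z - (x : ℂ)) ≠ 0 :=
      (Complex.normSq_pos.2 (ct_sub_ne hz x)).ne'
    field_simp
  have hGim : G.im = -(z.im * I) := by
    have h1 : ∫ x, (f x).im ∂μ = G.im := by
      have := integral_im (𝕜 := ℂ) hInt
      simp at this; exact this
    rw [← h1]
    calc ∫ x, (f x).im ∂μ = ∫ x, -(z.im * Complex.normSq (f x)) ∂μ := by
          simp_rw [him]
      _ = -(z.im * I) := by rw [integral_neg, integral_const_mul]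
  -- positivity of I
  have hIpos : 0 < I := by
    rw [hI]
    rw [integral_pos_iff_support_of_nonneg (fun x => Complex.normSq_nonneg _) hIntSq]
    have hsupp : Function.support (fun x : ℝ => Complex.normSq (f x)) = Set.univ := by
      rw [Set.eq_univ_iff_forall]
      intro x
      exact (Complex.normSq_pos.2 (inv_ne_zero (ct_sub_ne hz x))).ne'
    rw [hsupp]
    simp
  have hG0 : G ≠ 0 := by
    intro h
    rw [h] at hGim
    simp at hGim
    rcases hGim with h | h
    · linarith
    · linarith
  have hnsG : 0 < Complex.normSq G := Complex.normSq_pos.2 hG0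
  -- Cauchy–Schwarz via the variance identity
  have hIntmul : Integrable (fun x => ((f x) * (starRingEnd ℂ) G).re) μ :=
    (hInt.mul_const _).re
  have hmulint : ∫ x, ((f x) * (starRingEnd ℂ) G).re ∂μ = Complex.normSq G := by
    have h1 : ∫ x, (f x) * (starRingEnd ℂ) G ∂μ = G * (starRingEnd ℂ) G := by
      rw [integral_mul_const]
      rw [hG, cauchyTransform]
    have h2 := integral_re (𝕜 := ℂ) (hInt.mul_const ((starRingEnd ℂ) G))
    simp only [RCLike.re_to_complex] at h2
    rw [h2, h1, Complex.mul_conj, Complex.ofReal_re]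
  have hint1 : Integrable (fun x => Complex.normSq (f x) + Complex.normSq G) μ :=
    hIntSq.add (integrable_const _)
  have hint2 : Integrable (fun x => 2 * ((f x) * (starRingEnd ℂ) G).re) μ :=
    hIntmul.const_mul 2
  have hJInt : Integrable (fun x => Complex.normSq (f x - G)) μ := by
    have hexp : (fun x => Complex.normSq (f x - G)) =
        fun x => Complex.normSq (f x) + Complex.normSq G
          - 2 * ((f x) * (starRingEnd ℂ) G).re := by
      funext x; exact Complex.normSq_sub _ _
    rw [hexp]
    exact hint1.sub hint2
  have hJ : ∫ x, Complex.normSq (f x - G) ∂μ = I - Complex.normSq G := by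
    have hexp : (fun x => Complex.normSq (f x - G)) =
        fun x => Complex.normSq (f x) + Complex.normSq G
          - 2 * ((f x) * (starRingEnd ℂ) G).re := by
      funext x; exact Complex.normSq_sub _ _
    have hs1 : ∫ x, (Complex.normSq (f x) + Complex.normSq G) ∂μ
        = I + Complex.normSq G := by
      rw [integral_add hIntSq (integrable_const _), integral_const]
      simp [hI]
    have hs2 : ∫ x, (2 * ((f x) * (starRingEnd ℂ) G).re) ∂μ = 2 * Complex.normSq G := by
      rw [integral_const_mul, hmulint]
    rw [hexp, integral_sub hint1 hint2, hs1, hs2]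
    ring
  have hJnn : 0 ≤ ∫ x, Complex.normSq (f x - G) ∂μ :=
    integral_nonneg fun x => Complex.normSq_nonneg _
  have hle : Complex.normSq G ≤ I := by linarith [hJ ▸ hJnn]
  -- the formula for Im (1/G)
  have hform : (1 / G).im = z.im * I / Complex.normSq G := by
    rw [one_div, Complex.inv_im, hGim]
    ring
  constructor
  · rw [hform, le_div_iff₀ hnsG]
    exact mul_le_mul_of_nonneg_left hle hz.le
  · intro heq
    -- equality forces normSq G = I
    have hIGeq : I = Complex.normSq G := by
      rw [hform] at heq
      rw [div_eq_iff (ne_of_gt hnsG)] at heq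
      have h1 : z.im * I = z.im * Complex.normSq G := by linarith
      exact mul_left_cancel₀ (ne_of_gt hz) h1
    have hJ0 : ∫ x, Complex.normSq (f x - G) ∂μ = 0 := by rw [hJ, hIGeq]; ring
    have hae : (fun x => Complex.normSq (f x - G)) =ᵐ[μ] 0 :=
      (integral_eq_zero_iff_of_nonneg (fun x => Complex.normSq_nonneg _) hJInt).1 hJ0
    have haefG : ∀ᵐ x ∂μ, f x = G := by
      filter_upwards [hae] with x hx
      have := Complex.normSq_eq_zero.1 hx
      exact sub_eq_zero.1 this
    -- extract the atom
    set a : ℝ := (z - G⁻¹).re with ha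
    have hsub : {x : ℝ | f x = G} ⊆ {a} := by
      intro x hx
      have hx' : (z - (x : ℂ))⁻¹ = G := hx
      have h1 : z - (x : ℂ) = G⁻¹ := by
        rw [← hx', inv_inv]
      have h2 : (x : ℂ) = z - G⁻¹ := by rw [← h1]; ring
      have h3 : x = (z - G⁻¹).re := by
        rw [← h2, Complex.ofReal_re]
      simpa [ha] using h3
    have hcompl : μ {x : ℝ | f x ≠ G} = 0 := by
      have := haefG
      rwa [ae_iff] at this
    have hμa : μ {a} = 1 := by
      rw [← prob_compl_eq_zero_iff (measurableSet_singleton a)]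
      refine measure_mono_null ?_ hcompl
      intro x hx
      intro hfx
      exact hx (hsub hfx)
    refine ⟨a, ?_⟩
    ext s hs
    rw [Measure.dirac_apply' a hs]
    by_cases has : a ∈ s
    · have h1 : μ s ≤ 1 := prob_le_one
      have h2 : μ {a} ≤ μ s := measure_mono (Set.singleton_subset_iff.2 has)
      rw [hμa] at h2
      rw [le_antisymm h1 h2]
      simp [Set.indicator_of_mem has]
    · have h1 : μ s ≤ μ {a}ᶜ := by
        refine measure_mono ?_
        intro x hx hxa
        rw [Set.mem_singleton_iff] at hxa
        exact has (hxa ▸ hx)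
      have h2 : μ {a}ᶜ = 0 := by
        rw [prob_compl_eq_zero_iff (measurableSet_singleton a)]
        exact hμa
      rw [le_antisymm (h1.trans h2.le) zero_le]
      simp [Set.indicator_of_notMem has]

end aux

/-- For a probability measure `μ` on `ℝ`, one has `Im (1/G_μ(z)) ≥ Im z` for all `z` in the
upper half-plane, with equality for some such `z` if and only if `μ` is a Dirac measure. -/
theorem im_one_div_cauchyTransform_ge (μ : Measure ℝ) [IsProbabilityMeasure μ] :
    (∀ z : ℂ, 0 < z.im → z.im ≤ (1 / cauchyTransform μ z).im) ∧
    ((∃ z : ℂ, 0 < z.im ∧ (1 / cauchyTransform μ z).im = z.im) ↔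
      ∃ a : ℝ, μ = Measure.dirac a) := by
  refine ⟨fun z hz => (ct_key μ hz).1, ?_, ?_⟩
  · rintro ⟨z, hz, heq⟩
    exact (ct_key μ hz).2 heq
  · rintro ⟨a, rfl⟩
    refine ⟨(a : ℂ) + Complex.I, by simp, ?_⟩
    have hG : cauchyTransform (Measure.dirac a) ((a : ℂ) + Complex.I) = Complex.I⁻¹ := by
      rw [cauchyTransform, integral_dirac]
      congr 1
      ring
    rw [hG]
    simp
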